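/- If v_1, v_2, …, v_p ∈ ℝ[a] are univariate real polynomials that are linearly independent over ℝ, then the determinant of the p×p matrix whose (i,j) entry is v_i(a_j) is a nonzero polynomial in ℝ[a_1, a_2, …, a_p]. -/

import Mathlib

open MvPolynomial

open Module

lemma aux_sep : ∀ (n : ℕ) {α : Type} (M : Type) [AddCommGroup M] [Module ℝ M]
    [FiniteDimensional ℝ M], finrank ℝ M = n →
    ∀ ε : α → (M →ₗ[ℝ] ℝ), (∀ m : M, (∀ x, ε x m = 0) → m = 0) →
    ∃ s : Fin n → α, ∀ m : M, (∀ j, ε (s j) m = 0) → m = 0 := by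
  intro n
  induction n with
  | zero =>
    intro α M _ _ _ hrank ε _
    have : Subsingleton M := finrank_zero_iff.mp hrank
    exact ⟨Fin.elim0, fun m _ => Subsingleton.elim m 0⟩
  | succ n ih =>
    intro α M _ _ _ hrank ε hsep
    have : Nontrivial M := by
      exact Module.nontrivial_of_finrank_pos (R := ℝ) (by omega)
    obtain ⟨m0, hm0⟩ := exists_ne (0 : M)
    obtain ⟨x, hx⟩ : ∃ x, ε x m0 ≠ 0 := by
      by_contra h
      push_neg at h
      exact hm0 (hsep _ h)
    set K := LinearMap.ker (ε x) with hKdef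
    have hsurj : Function.Surjective (ε x) := by
      intro r
      exact ⟨(r * (ε x m0)⁻¹) • m0, by field_simp; rw [map_smul, smul_eq_mul, div_mul_cancel₀ _ hx]⟩
    have hK : finrank ℝ K = n := by
      have h1 := LinearMap.finrank_range_add_finrank_ker (ε x)
      rw [LinearMap.range_eq_top.mpr hsurj] at h1
      rw [hrank] at h1
      rw [hKdef]
      simp [finrank_top] at h1
      omega
    obtain ⟨s', hs'⟩ := ih (K : Type) hK (fun y => (ε y).comp K.subtype)
      (fun m hm => Subtype.ext (hsep (m : M) hm))
    refine ⟨Fin.cons x s', fun m hm => ?_⟩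
    have hmK : m ∈ K := by
      have := hm 0
      simpa [hKdef] using this
    have := hs' ⟨m, hmK⟩ (fun j => by simpa using hm j.succ)
    exact congrArg Subtype.val this


/-- If `v 1, …, v p ∈ ℝ[a]` are `ℝ`-linearly independent univariate polynomials, then the
determinant of the `p × p` matrix with `(i,j)` entry `v i (a j)` is a nonzero polynomial
in `ℝ[a₁,…,a_p]`. -/
theorem stmt_9 (p : ℕ) (v : Fin p → Polynomial ℝ) (hli : LinearIndependent ℝ v) :
    Matrix.det (Matrix.of fun i j : Fin p =>
      Polynomial.aeval (X j : MvPolynomial (Fin p) ℝ) (v i)) ≠ 0 := by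
  -- separating family of evaluation functionals on coefficient space
  have hsep : ∀ c : Fin p → ℝ, (∀ x : ℝ, (∑ i, c i • v i).eval x = 0) → c = 0 := by
    intro c hc
    have hz : (∑ i, c i • v i) = 0 := by
      apply Polynomial.funext
      intro x
      simpa using hc x
    have := (Fintype.linearIndependent_iff.mp hli) c hz
    funext i; exact this i
  obtain ⟨s, hs⟩ := aux_sep p (Fin p → ℝ) (finrank_fin_fun ℝ)
    (fun x => ∑ i, (LinearMap.proj i).smulRight ((v i).eval x))
    (by
      intro c hc
      apply hsep c
      intro x
      have := hc x
      simpa [Polynomial.eval_finset_sum] using this)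
  set A : Matrix (Fin p) (Fin p) ℝ := Matrix.of fun i j => (v i).eval (s j) with hA
  have hdetA : A.det ≠ 0 := by
    intro h0
    have h0' : A.transpose.det = 0 := by rwa [Matrix.det_transpose]
    obtain ⟨c, hc0, hcv⟩ := (Matrix.exists_mulVec_eq_zero_iff).mpr h0'
    apply hc0
    apply hs c
    intro j
    have := congrFun hcv j
    simp [Matrix.mulVec, dotProduct, hA, mul_comm] at this ⊢
    simpa [mul_comm] using this
  intro h0
  apply hdetA
  have := congrArg (MvPolynomial.eval s) h0
  rw [RingHom.map_det] at this
  rw [map_zero] at this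
  convert this using 2
  ext i j
  simp only [hA, Matrix.of_apply, RingHom.mapMatrix_apply, Matrix.map_apply,
    Polynomial.aeval_def, Polynomial.hom_eval₂, eval_X]
  have hid : (MvPolynomial.eval s).comp (C : ℝ →+* MvPolynomial (Fin p) ℝ) = RingHom.id ℝ := by
    ext r; simp
  rw [show (algebraMap ℝ (MvPolynomial (Fin p) ℝ)) = C from rfl, hid]
  rfl
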